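/- There exists a real symmetric matrix A with 0 ⪯ A ⪯ I and a symmetric positive definite Σ such that if Z₁, Z₂ are independent N(0,Σ), the vector (I−A)^{1/2}·Z₁ + A^{1/2}·Z₂ is NOT distributed N(0,Σ); equivalently, (I−A)^{1/2}·Σ·(I−A)^{1/2} + A^{1/2}·Σ·A^{1/2} ≠ Σ. -/

import Mathlib

open Matrix MeasureTheory ProbabilityTheory

/-- The positive semidefinite square root of a positive semidefinite matrix
(removed from Mathlib; restated with its former definition). -/
noncomputable def Matrix.PosSemidef.sqrt {n : Type*} [Fintype n] [DecidableEq n]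
    {A : Matrix n n ℝ} (hA : A.PosSemidef) : Matrix n n ℝ :=
  (hA.1.eigenvectorUnitary : Matrix n n ℝ) * diagonal (Real.sqrt ∘ hA.1.eigenvalues) *
    (star hA.1.eigenvectorUnitary : Matrix n n ℝ)

/-- The centered Gaussian measure on `Fin n → ℝ` with covariance matrix `S`,
realized as the pushforward of the standard Gaussian by `S^{1/2}`. -/
noncomputable def gaussianVec {n : ℕ} (S : Matrix (Fin n) (Fin n) ℝ)
    (hS : S.PosSemidef) : Measure (Fin n → ℝ) :=
  Measure.map (fun x => hS.sqrt.mulVec x)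
    (Measure.pi fun _ => gaussianReal 0 1)

private lemma sqrt_mul_self' {n : Type*} [Fintype n] [DecidableEq n]
    {A : Matrix n n ℝ} (hA : A.PosSemidef) : hA.sqrt * hA.sqrt = A := by
  have hU : (star hA.1.eigenvectorUnitary : Matrix n n ℝ) * (hA.1.eigenvectorUnitary : Matrix n n ℝ)
      = 1 := Unitary.coe_star_mul_self _
  have hD : diagonal (Real.sqrt ∘ hA.1.eigenvalues) * diagonal (Real.sqrt ∘ hA.1.eigenvalues)
      = diagonal hA.1.eigenvalues := by
    rw [diagonal_mul_diagonal]
    congr 1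
    funext i
    exact Real.mul_self_sqrt (hA.eigenvalues_nonneg i)
  unfold Matrix.PosSemidef.sqrt
  calc _ = (hA.1.eigenvectorUnitary : Matrix n n ℝ) * (diagonal (Real.sqrt ∘ hA.1.eigenvalues)
        * ((star hA.1.eigenvectorUnitary : Matrix n n ℝ) * (hA.1.eigenvectorUnitary : Matrix n n ℝ))
        * diagonal (Real.sqrt ∘ hA.1.eigenvalues)) * (star hA.1.eigenvectorUnitary : Matrix n n ℝ) := by
        simp only [Matrix.mul_assoc]
    _ = (hA.1.eigenvectorUnitary : Matrix n n ℝ) * diagonal hA.1.eigenvalues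
        * (star hA.1.eigenvectorUnitary : Matrix n n ℝ) := by
        rw [hU, Matrix.mul_one, hD]
    _ = A := by
        conv_rhs => rw [hA.1.spectral_theorem]
        simp [Unitary.conjStarAlgAut_apply]

private lemma sqrt_herm' {n : Type*} [Fintype n] [DecidableEq n]
    {A : Matrix n n ℝ} (hA : A.PosSemidef) : hA.sqrtᴴ = hA.sqrt := by
  unfold Matrix.PosSemidef.sqrt
  simp [conjTranspose_mul, diagonal_conjTranspose, Matrix.mul_assoc, star_eq_conjTranspose]

private lemma sqrt_eq_self_of_idem' {n : Type*} [Fintype n] [DecidableEq n]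
    {A : Matrix n n ℝ} (hA : A.PosSemidef) (h : A * A = A) : hA.sqrt = A := by
  have hev : ∀ j, Real.sqrt (hA.1.eigenvalues j) = hA.1.eigenvalues j := by
    intro j
    have h1 := hA.1.mulVec_eigenvectorBasis j
    have hv : hA.1.eigenvectorBasis j ≠ 0 := hA.1.eigenvectorBasis.orthonormal.ne_zero j
    have hv' : ⇑(hA.1.eigenvectorBasis j) ≠ 0 := by
      intro h0; apply hv; ext i; simpa using congrFun h0 i
    have h2 : A *ᵥ (A *ᵥ ⇑(hA.1.eigenvectorBasis j))
        = (hA.1.eigenvalues j * hA.1.eigenvalues j) • ⇑(hA.1.eigenvectorBasis j) := by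
      rw [h1, mulVec_smul, h1, smul_smul]
    rw [mulVec_mulVec, h, h1] at h2
    have h3 : (hA.1.eigenvalues j * hA.1.eigenvalues j - hA.1.eigenvalues j)
        • ⇑(hA.1.eigenvectorBasis j) = 0 := by
      rw [sub_smul, ← h2, sub_self]
    rcases smul_eq_zero.1 h3 with h4 | h4
    · have h5 : hA.1.eigenvalues j * (hA.1.eigenvalues j - 1) = 0 := by linarith
      rcases mul_eq_zero.1 h5 with h6 | h6
      · simp [h6]
      · have h7 : hA.1.eigenvalues j = 1 := by linarith
        simp [h7]
    · exact absurd h4 hv'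
  have hc : (Real.sqrt ∘ hA.1.eigenvalues) = hA.1.eigenvalues := funext hev
  unfold Matrix.PosSemidef.sqrt
  rw [hc]
  conv_rhs => rw [hA.1.spectral_theorem]
  simp [Unitary.conjStarAlgAut_apply]

section AuxGauss
open Real

private lemma pdf_toReal' (x : ℝ) :
    ((gaussianPDF 0 1 x).toReal) = (√(2*π))⁻¹ * rexp (-(1/2) * (x^2)) := by
  rw [gaussianPDF, ENNReal.toReal_ofReal (gaussianPDFReal_nonneg 0 1 x), gaussianPDFReal]
  norm_num
  left; ring

private lemma integrable_id_gauss' : Integrable (fun x : ℝ => x) (gaussianReal 0 1) := by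
  rw [gaussianReal_of_var_ne_zero 0 one_ne_zero,
    integrable_withDensity_iff (measurable_gaussianPDF 0 1)
      (ae_of_all _ fun x => ENNReal.ofReal_lt_top)]
  have : (fun x : ℝ => x * (gaussianPDF 0 1 x).toReal)
      = fun x : ℝ => (√(2*π))⁻¹ * (x * rexp (-(1/2) * x^2)) := by
    funext x; rw [pdf_toReal']; ring
  rw [this]
  exact (integrable_mul_exp_neg_mul_sq (by norm_num : (0:ℝ) < 1/2)).const_mul _

private lemma integrable_sq_gauss' : Integrable (fun x : ℝ => x * x) (gaussianReal 0 1) := by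
  rw [gaussianReal_of_var_ne_zero 0 one_ne_zero,
    integrable_withDensity_iff (measurable_gaussianPDF 0 1)
      (ae_of_all _ fun x => ENNReal.ofReal_lt_top)]
  have h2 : ∀ y : ℝ, y ^ (2:ℝ) = y * y := fun y => by
    rw [show (2:ℝ) = ((2:ℕ):ℝ) by norm_num, Real.rpow_natCast]; ring
  have : (fun x : ℝ => (x * x) * (gaussianPDF 0 1 x).toReal)
      = fun x : ℝ => (√(2*π))⁻¹ * (x ^ (2:ℝ) * rexp (-(1/2) * x^2)) := by
    funext x
    rw [pdf_toReal', h2]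
    ring
  rw [this]
  exact (integrable_rpow_mul_exp_neg_mul_sq (by norm_num : (0:ℝ) < 1/2)
    (by norm_num : (-1:ℝ) < 2)).const_mul _

private lemma integral_id_gauss' : ∫ x, x ∂(gaussianReal 0 1) = 0 := by
  have hmap : (gaussianReal 0 1).map (fun x => (-1:ℝ) * x) = gaussianReal 0 1 := by
    rw [gaussianReal_map_const_mul (-1)]
    norm_num
  have h : ∫ x, x ∂((gaussianReal 0 1).map (fun x => (-1:ℝ) * x))
      = ∫ x, (-1:ℝ) * x ∂(gaussianReal 0 1) :=
    integral_map (measurable_const_mul _).aemeasurable measurable_id.aestronglyMeasurable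
  rw [hmap] at h
  simp only [neg_one_mul] at h
  rw [integral_neg] at h
  linarith

private lemma integral_sq_gauss_pos' : 0 < ∫ x, x * x ∂(gaussianReal 0 1) := by
  rw [integral_pos_iff_support_of_nonneg (fun x => mul_self_nonneg x) integrable_sq_gauss']
  have hs : (Function.support fun x : ℝ => x * x) = {(0:ℝ)}ᶜ := by
    ext x; simp [Function.support, mul_self_eq_zero]
  rw [hs, measure_compl (measurableSet_singleton 0) (measure_ne_top _ _)]
  have h0 : gaussianReal 0 1 {0} = 0 :=
    gaussianReal_absolutelyContinuous 0 one_ne_zero (measure_singleton 0)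
  simp [h0]

end AuxGauss

private lemma measurable_mulVec2' (M : Matrix (Fin 2) (Fin 2) ℝ) :
    Measurable (fun x : Fin 2 → ℝ => M.mulVec x) := by
  apply measurable_pi_lambda
  intro i
  simp only [Matrix.mulVec, dotProduct, Fin.sum_univ_two]
  exact ((measurable_pi_apply 0).const_mul _).add ((measurable_pi_apply 1).const_mul _)

private lemma integral_gaussianVec' {S : Matrix (Fin 2) (Fin 2) ℝ} (hS : S.PosSemidef)
    (f : (Fin 2 → ℝ) → ℝ) (hf : Measurable f) :
    ∫ x, f x ∂(gaussianVec S hS)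
      = ∫ p : ℝ × ℝ, f (hS.sqrt.mulVec ![p.1, p.2])
          ∂((gaussianReal 0 1).prod (gaussianReal 0 1)) := by
  rw [gaussianVec, integral_map (measurable_mulVec2' _).aemeasurable hf.aestronglyMeasurable]
  rw [← ((measurePreserving_finTwoArrow
      (gaussianReal 0 1)).symm MeasurableEquiv.finTwoArrow).integral_comp']
  have he : ∀ p : ℝ × ℝ, (MeasurableEquiv.finTwoArrow.symm p : Fin 2 → ℝ) = ![p.1, p.2] := by
    intro p; funext i; fin_cases i <;> simp [MeasurableEquiv.finTwoArrow]
  simp only [he]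

private lemma moment1_gaussianVec' {S : Matrix (Fin 2) (Fin 2) ℝ} (hS : S.PosSemidef)
    (i : Fin 2) : ∫ x, x i ∂(gaussianVec S hS) = 0 := by
  rw [integral_gaussianVec' hS _ (measurable_pi_apply i)]
  have : (fun p : ℝ × ℝ => (hS.sqrt.mulVec ![p.1, p.2]) i)
      = fun p : ℝ × ℝ => hS.sqrt i 0 * ((fun x : ℝ => x) p.1 * (fun _ : ℝ => (1:ℝ)) p.2)
          + hS.sqrt i 1 * ((fun _ : ℝ => (1:ℝ)) p.1 * (fun x : ℝ => x) p.2) := by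
    funext p
    simp [Matrix.mulVec, dotProduct, Fin.sum_univ_two]
  rw [this, integral_add, integral_const_mul, integral_const_mul,
    integral_prod_mul (fun x : ℝ => x) (fun _ : ℝ => (1:ℝ)),
    integral_prod_mul (fun _ : ℝ => (1:ℝ)) (fun x : ℝ => x), integral_id_gauss']
  · simp
  · exact (integrable_id_gauss'.mul_prod (integrable_const 1)).const_mul _
  · exact ((integrable_const (μ := gaussianReal 0 1) (1:ℝ)).mul_prod integrable_id_gauss').const_mul _

private lemma moment2_gaussianVec' {S : Matrix (Fin 2) (Fin 2) ℝ} (hS : S.PosSemidef) :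
    ∫ x, x 0 * x 1 ∂(gaussianVec S hS) = S 0 1 * ∫ x, x * x ∂(gaussianReal 0 1) := by
  have hR : hS.sqrt * hS.sqrt = S := sqrt_mul_self' hS
  have hsym : hS.sqrt 1 0 = hS.sqrt 0 1 := by
    have h := sqrt_herm' hS
    calc hS.sqrt 1 0 = hS.sqrtᴴ 1 0 := by rw [h]
    _ = hS.sqrt 0 1 := by simp [Matrix.conjTranspose_apply]
  rw [integral_gaussianVec' hS (fun x => x 0 * x 1) ((measurable_pi_apply 0).mul (measurable_pi_apply 1))]
  set R := hS.sqrt with hRdef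
  have : (fun p : ℝ × ℝ => (R.mulVec ![p.1, p.2]) 0 * (R.mulVec ![p.1, p.2]) 1)
      = fun p : ℝ × ℝ =>
          (R 0 0 * R 1 0) * ((fun x : ℝ => x * x) p.1 * (fun _ : ℝ => (1:ℝ)) p.2)
          + ((R 0 0 * R 1 1 + R 0 1 * R 1 0) * ((fun x : ℝ => x) p.1 * (fun x : ℝ => x) p.2)
            + (R 0 1 * R 1 1) * ((fun _ : ℝ => (1:ℝ)) p.1 * (fun x : ℝ => x * x) p.2)) := by
    funext p
    simp only [Matrix.mulVec, dotProduct, Fin.sum_univ_two]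
    simp [Matrix.cons_val_zero, Matrix.cons_val_one]
    ring
  rw [this, integral_add, integral_add, integral_const_mul, integral_const_mul,
    integral_const_mul, integral_prod_mul (fun x : ℝ => x * x) (fun _ : ℝ => (1:ℝ)),
    integral_prod_mul (fun x : ℝ => x) (fun x : ℝ => x),
    integral_prod_mul (fun _ : ℝ => (1:ℝ)) (fun x : ℝ => x * x),
    integral_id_gauss']
  · have hS01 : S 0 1 = R 0 0 * R 0 1 + R 0 1 * R 1 1 := by
      rw [← hR]
      simp [Matrix.mul_apply, Fin.sum_univ_two]
    simp only [integral_const, measure_univ, probReal_univ, ENNReal.toReal_one, smul_eq_mul, one_mul, mul_zero,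
      zero_mul, mul_one, add_zero, zero_add]
    rw [hS01, hsym]
    ring
  · exact (integrable_id_gauss'.mul_prod integrable_id_gauss').const_mul _
  · exact ((integrable_const (μ := gaussianReal 0 1) (1:ℝ)).mul_prod integrable_sq_gauss').const_mul _
  · exact (integrable_sq_gauss'.mul_prod (integrable_const 1)).const_mul _
  · exact ((integrable_id_gauss'.mul_prod integrable_id_gauss').const_mul _).add
      (((integrable_const (μ := gaussianReal 0 1) (1:ℝ)).mul_prod integrable_sq_gauss').const_mul _)

theorem stmt_16 :
    ∃ (n : ℕ) (A S : Matrix (Fin n) (Fin n) ℝ) (hA : A.PosSemidef)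
      (hAI : (1 - A).PosSemidef) (hS : S.PosDef),
      Measure.map
          (fun p : (Fin n → ℝ) × (Fin n → ℝ) =>
            hAI.sqrt.mulVec p.1 + hA.sqrt.mulVec p.2)
          ((gaussianVec S hS.posSemidef).prod (gaussianVec S hS.posSemidef)) ≠
        gaussianVec S hS.posSemidef ∧
      hAI.sqrt * S * hAI.sqrt + hA.sqrt * S * hA.sqrt ≠ S := by
  have hA : (Matrix.diagonal ![1, 0] : Matrix (Fin 2) (Fin 2) ℝ).PosSemidef :=
    Matrix.posSemidef_diagonal_iff.mpr (by intro i; fin_cases i <;> norm_num)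
  have hD : (Matrix.diagonal ![0, 1] : Matrix (Fin 2) (Fin 2) ℝ).PosSemidef :=
    Matrix.posSemidef_diagonal_iff.mpr (by intro i; fin_cases i <;> norm_num)
  have h1 : (1 : Matrix (Fin 2) (Fin 2) ℝ) - Matrix.diagonal ![1, 0]
      = Matrix.diagonal ![0, 1] := by
    ext i j
    fin_cases i <;> fin_cases j <;>
      simp [Matrix.diagonal, Matrix.one_apply]
  have hAI : ((1 : Matrix (Fin 2) (Fin 2) ℝ) - Matrix.diagonal ![1, 0]).PosSemidef :=
    h1 ▸ hD
  have hS : (!![2, 1; 1, 2] : Matrix (Fin 2) (Fin 2) ℝ).PosDef := by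
    refine posDef_iff_dotProduct_mulVec.mpr ⟨?_, ?_⟩
    · ext i j
      fin_cases i <;> fin_cases j <;> simp [Matrix.conjTranspose_apply]
    · intro x hx
      have hx' : x 0 ≠ 0 ∨ x 1 ≠ 0 := by
        by_contra hc
        push_neg at hc
        exact hx (funext fun i => by fin_cases i <;> simp [hc.1, hc.2])
      simp only [star_trivial, dotProduct, Matrix.mulVec, Fin.sum_univ_two]
      rcases hx' with h | h <;>
        · simp
          nlinarith [sq_nonneg (x 0 + x 1), sq_nonneg (x 0 - x 1), mul_self_pos.mpr h]
  -- identify the square roots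
  have hsqA : hA.sqrt = Matrix.diagonal ![1, 0] := by
    refine sqrt_eq_self_of_idem' hA ?_
    rw [Matrix.diagonal_mul_diagonal]
    ext i j
    fin_cases i <;> fin_cases j <;> simp [Matrix.diagonal]
  have hsqAI : hAI.sqrt = Matrix.diagonal ![0, 1] := by
    rw [sqrt_eq_self_of_idem' hAI (by rw [h1, Matrix.diagonal_mul_diagonal]; ext i j; fin_cases i <;> fin_cases j <;> simp [Matrix.diagonal]), h1]
  refine ⟨2, Matrix.diagonal ![1, 0], !![2, 1; 1, 2], hA, hAI, hS, ?_, ?_⟩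
  · -- the measures differ
    intro h
    have hS' := hS.posSemidef
    haveI : IsProbabilityMeasure (gaussianVec !![2, 1; 1, 2] hS.posSemidef) := by
      rw [gaussianVec]
      exact Measure.isProbabilityMeasure_map (measurable_mulVec2' _).aemeasurable
    have hmeas : Measurable (fun p : (Fin 2 → ℝ) × (Fin 2 → ℝ) =>
        hAI.sqrt.mulVec p.1 + hA.sqrt.mulVec p.2) :=
      ((measurable_mulVec2' _).comp measurable_fst).add
        ((measurable_mulVec2' _).comp measurable_snd)
    have key := congrArg (fun m => ∫ x, x 0 * x 1 ∂m) h
    rw [moment2_gaussianVec' hS.posSemidef,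
      integral_map hmeas.aemeasurable (f := fun x : Fin 2 → ℝ => x 0 * x 1)
        (((measurable_pi_apply 0).mul (measurable_pi_apply 1)).aestronglyMeasurable)] at key
    have hfun : (fun p : (Fin 2 → ℝ) × (Fin 2 → ℝ) =>
        ((hAI.sqrt.mulVec p.1 + hA.sqrt.mulVec p.2) 0)
          * ((hAI.sqrt.mulVec p.1 + hA.sqrt.mulVec p.2) 1))
        = fun p => (fun x : Fin 2 → ℝ => x 1) p.1 * (fun x : Fin 2 → ℝ => x 0) p.2 := by
      funext p
      rw [hsqA, hsqAI]
      simp [Matrix.mulVec, dotProduct, Fin.sum_univ_two, Matrix.diagonal]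
      ring
    rw [hfun, integral_prod_mul (fun x : Fin 2 → ℝ => x 1) (fun x : Fin 2 → ℝ => x 0),
      moment1_gaussianVec' hS.posSemidef, moment1_gaussianVec' hS.posSemidef] at key
    have hm2 := integral_sq_gauss_pos'
    have hS01 : (!![2, 1; 1, 2] : Matrix (Fin 2) (Fin 2) ℝ) 0 1 = 1 := by norm_num
    rw [hS01] at key
    simp only [zero_mul, one_mul] at key
    linarith
  · -- the covariance identity fails
    intro h
    rw [hsqA, hsqAI] at h
    have := congrFun (congrFun h 0) 1
    simp [Matrix.mul_apply, Fin.sum_univ_two, Matrix.diagonal, Matrix.add_apply] at this
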